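/- Let G=(V,E,w) be a simple weighted digraph and 𝒮 = {S_0,…,S_{k−1}} a clustering of G such that every cluster has positive volume. If 𝒮 is a perfect clustering, then δ(𝒮) = 0. Conversely, if δ(𝒮) = 0 and for every pair i ≠ j with at least one edge between S_i and S_j it holds that (i,j) ∈ E^𝒮 or (j,i) ∈ E^𝒮, then 𝒮 is perfect. -/
import Mathlib


open Finset

/-- Let `G = (V, E, w)` be a simple weighted digraph and
`𝒮 = {S_0, …, S_{k-1}}` a clustering of `G` (encoded by `σ : V → Fin k` with every
cluster nonempty) such that every cluster has positive volume.  If `𝒮` is a perfect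
clustering, then `δ(𝒮) = 0`.  Conversely, if `δ(𝒮) = 0` and for every pair `i ≠ j` with
at least one edge between `S_i` and `S_j` it holds that `(i,j) ∈ E^𝒮` or `(j,i) ∈ E^𝒮`,
then `𝒮` is perfect. -/
theorem stmt_12 {V : Type*} [Fintype V] [DecidableEq V]
    (w : V → V → ℝ) (hw : ∀ u v, 0 ≤ w u v)
    (hloop : ∀ u, w u u = 0)
    (hsimple : ∀ u v, ¬(0 < w u v ∧ 0 < w v u))
    (k : ℕ) (hk : 2 ≤ k)
    (σ : V → Fin k) (hσ : ∀ i : Fin k, ∃ u, σ u = i)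
    (Em : Fin k → Fin k → Prop) [DecidableRel Em]
    (hEm : ∀ i j : Fin k, Em i j ↔
      (∑ u, ∑ v, if σ u = j ∧ σ v = i then w u v else 0) <
      (∑ u, ∑ v, if σ u = i ∧ σ v = j then w u v else 0))
    (vol : Fin k → ℝ)
    (hvol : ∀ i, vol i = ∑ u, if σ u = i then (∑ v, (w u v + w v u)) else 0)
    (hpos : ∀ i, 0 < vol i)
    (δ : ℝ)
    (hδ : δ = ∑ i : Fin k, ∑ j : Fin k, if Em i j then
      (∑ u, ∑ v, if σ u = j ∧ σ v = i ∧ 0 < w u v then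
        w u v / min (vol i) (vol j) else 0) else 0) :
    ((∀ u v, 0 < w u v → σ u ≠ σ v → Em (σ u) (σ v)) → δ = 0) ∧
    (δ = 0 →
      (∀ i j : Fin k, i ≠ j →
        (∃ u v, ((σ u = i ∧ σ v = j) ∨ (σ u = j ∧ σ v = i)) ∧ 0 < w u v) →
        Em i j ∨ Em j i) →
      ∀ u v, 0 < w u v → σ u ≠ σ v → Em (σ u) (σ v)) := by
  have hnn : ∀ (a b : Fin k), 0 ≤ (if Em a b then
      (∑ u, ∑ v, if σ u = b ∧ σ v = a ∧ 0 < w u v then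
        w u v / min (vol a) (vol b) else 0) else 0) := by
    intro a b
    split_ifs
    · refine Finset.sum_nonneg fun u _ => Finset.sum_nonneg fun v _ => ?_
      split_ifs with h
      · exact div_nonneg (hw _ _) (lt_min (hpos a) (hpos b)).le
      · exact le_refl 0
    · exact le_refl 0
  constructor
  · intro hperf
    rw [hδ]
    refine Finset.sum_eq_zero fun i _ => Finset.sum_eq_zero fun j _ => ?_
    split_ifs with hij
    · refine Finset.sum_eq_zero fun u _ => Finset.sum_eq_zero fun v _ => ?_
      split_ifs with h
      · exfalso
        obtain ⟨hu, hv, hw'⟩ := h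
        have hne : σ u ≠ σ v := by
          intro he
          rw [hu, hv] at he
          subst he
          exact lt_irrefl _ ((hEm _ _).mp hij)
        have hji := hperf u v hw' hne
        rw [hu, hv] at hji
        have h1 := (hEm i j).mp hij
        have h2 := (hEm j i).mp hji
        linarith
      · rfl
    · rfl
  · intro hz hcov u v hw' hne
    rcases hcov (σ u) (σ v) hne ⟨u, v, Or.inl ⟨rfl, rfl⟩, hw'⟩ with hij | hji
    · exact hij
    · exfalso
      rw [hδ] at hz
      have h1 := (Finset.sum_eq_zero_iff_of_nonneg
        (fun a _ => Finset.sum_nonneg fun b _ => hnn a b)).mp hz (σ v) (Finset.mem_univ _)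
      have h2 := (Finset.sum_eq_zero_iff_of_nonneg
        (fun b _ => hnn (σ v) b)).mp h1 (σ u) (Finset.mem_univ _)
      rw [if_pos hji] at h2
      have h3 := (Finset.sum_eq_zero_iff_of_nonneg
        (fun u' (_ : u' ∈ Finset.univ) => Finset.sum_nonneg fun v' _ => by
          split_ifs with h
          · exact div_nonneg (hw _ _) (lt_min (hpos (σ v)) (hpos (σ u))).le
          · exact le_refl 0)).mp h2 u (Finset.mem_univ _)
      have h4 := (Finset.sum_eq_zero_iff_of_nonneg
        (fun v' (_ : v' ∈ Finset.univ) => by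
          split_ifs with h
          · exact div_nonneg (hw _ _) (lt_min (hpos (σ v)) (hpos (σ u))).le
          · exact le_refl 0)).mp h3 v (Finset.mem_univ _)
      rw [if_pos ⟨rfl, rfl, hw'⟩] at h4
      have : 0 < w u v / min (vol (σ v)) (vol (σ u)) :=
        div_pos hw' (lt_min (hpos (σ v)) (hpos (σ u)))
      linarith
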